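/- arXiv:0810.0772 — 4 statements merged into one kernel-verified Lean document; each statement's English description precedes it below -/
import Mathlib

section
/- In a real Hilbert space, every Chebyshev set whose metric projection is continuous is convex. -/
open Filter Metric

local notation "⟪" x ", " y "⟫" => @inner ℝ _ _ x y

private lemma key_alg {H : Type*} [NormedAddCommGroup H] [InnerProductSpace ℝ H]
    (w z m p : H) :
    ‖w - m‖^2 - ‖w - p‖^2 - (‖z - m‖^2 - ‖z - p‖^2) = 2 * ⟪p - m, w - z⟫ := by
  simp only [norm_sub_sq_real, inner_sub_left, inner_sub_right]
  ring_nf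
  simp [real_inner_comm]
  ring

set_option maxHeartbeats 1000000 in
/-- In a real Hilbert space, every Chebyshev set whose metric projection is
(sequentially) continuous is convex. -/
theorem stmt_2 {H : Type*} [NormedAddCommGroup H] [InnerProductSpace ℝ H] [CompleteSpace H]
    (K : Set H)
    (hcheb : ∀ x : H, ∃! v, v ∈ K ∧ ‖x - v‖ = infDist x K)
    (P : H → H) (hP : ∀ x, P x ∈ K ∧ ‖x - P x‖ = infDist x K)
    (hPcont : ∀ (u : ℕ → H) (x : H), Tendsto u atTop (nhds x) →
      Tendsto (fun n => P (u n)) atTop (nhds (P x))) :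
    Convex ℝ K := by
  have hPK : ∀ x, P x ∈ K := fun x => (hP x).1
  have hPd : ∀ x, ‖x - P x‖ = infDist x K := fun x => (hP x).2
  have hd_le : ∀ x : H, ∀ u ∈ K, infDist x K ≤ ‖x - u‖ := by
    intro x u hu
    simpa [dist_eq_norm] using infDist_le_dist_of_mem hu
  intro a ha b hb s t hs ht hst
  set m : H := s • a + t • b with hm
  clear_value m
  obtain ⟨h, hh⟩ : ∃ h : H → ℝ, ∀ z, h z = ‖z - m‖^2 - (infDist z K)^2 :=
    ⟨_, fun _ => rfl⟩
  have hdnn : ∀ z : H, (0:ℝ) ≤ infDist z K := fun z => infDist_nonneg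
  -- subgradient inequality
  have hsub : ∀ z w : H, h z + 2 * ⟪P z - m, w - z⟫ ≤ h w := by
    intro z w
    have h1 : infDist w K ≤ ‖w - P z‖ := hd_le w _ (hPK z)
    have h2 : (infDist w K)^2 ≤ ‖w - P z‖^2 := by nlinarith [hdnn w]
    have h3 := key_alg w z m (P z)
    have h4 : h z = ‖z - m‖^2 - ‖z - P z‖^2 := by rw [hh, hPd z]
    have h5 := hh w
    nlinarith
  -- lower bound
  obtain ⟨L, hL⟩ : ∃ L : ℝ, L = ‖m‖^2 - s * ‖a‖^2 - t * ‖b‖^2 := ⟨_, rfl⟩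
  have hlow : ∀ z : H, L ≤ h z := by
    intro z
    rw [hL, hh]
    have hia : (infDist z K)^2 ≤ ‖z - a‖^2 := by nlinarith [hd_le z a ha, hdnn z]
    have hib : (infDist z K)^2 ≤ ‖z - b‖^2 := by nlinarith [hd_le z b hb, hdnn z]
    have e1 : ‖z - m‖^2 = ‖z‖^2 - 2*⟪z, m⟫ + ‖m‖^2 := norm_sub_sq_real z m
    have e2 : ‖z - a‖^2 = ‖z‖^2 - 2*⟪z, a⟫ + ‖a‖^2 := norm_sub_sq_real z a
    have e3 : ‖z - b‖^2 = ‖z‖^2 - 2*⟪z, b⟫ + ‖b‖^2 := norm_sub_sq_real z b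
    have e4 : ⟪z, m⟫ = s * ⟪z, a⟫ + t * ⟪z, b⟫ := by
      rw [hm, inner_add_right, real_inner_smul_right, real_inner_smul_right]
    nlinarith [mul_le_mul_of_nonneg_left hia hs, mul_le_mul_of_nonneg_left hib ht]
  have hcont : Continuous h := by
    have : h = fun z => ‖z - m‖^2 - (infDist z K)^2 := funext hh
    rw [this]
    exact ((continuous_id.sub continuous_const).norm.pow 2).sub
      ((continuous_infDist_pt K).pow 2)
  -- main step: approximate projections of m
  have main : ∀ δ : ℝ, 0 < δ → infDist m K ≤ δ := by
    intro δ hδ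
    obtain ⟨C, hC⟩ : ∃ C : ℝ, C = h 0 - L := ⟨_, rfl⟩
    have hC0 : 0 ≤ C := by rw [hC]; linarith [hlow 0]
    obtain ⟨ε, hε⟩ : ∃ ε : ℝ, ε = δ^2 / (C + 1) := ⟨_, rfl⟩
    have hε0 : 0 < ε := by rw [hε]; positivity
    obtain ⟨f, hf⟩ : ∃ f : H → ℝ, ∀ z, f z = h z + ε * ‖z‖^2 := ⟨_, fun _ => rfl⟩
    have hcontf : Continuous f := by
      have : f = fun z => h z + ε * ‖z‖^2 := funext hf
      rw [this]
      exact hcont.add (continuous_const.mul (continuous_norm.pow 2))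
    have hfl : ∀ z, L ≤ f z := by
      intro z
      rw [hf]
      have h1 : 0 ≤ ε * ‖z‖^2 := by positivity
      linarith [hlow z]
    have hbdd : BddBelow (Set.range f) := ⟨L, by rintro y ⟨z, rfl⟩; exact hfl z⟩
    have hne : (Set.range f).Nonempty := ⟨f 0, ⟨0, rfl⟩⟩
    obtain ⟨I, hI⟩ : ∃ I : ℝ, I = sInf (Set.range f) := ⟨_, rfl⟩
    have hI_le : ∀ w, I ≤ f w := fun w => hI ▸ csInf_le hbdd ⟨w, rfl⟩
    have hchoose : ∀ k : ℕ, ∃ u : H, f u < I + 1/(k+1) := by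
      intro k
      have hlt : I < I + 1/(k+1) := by
        have : (0:ℝ) < 1/(k+1) := by positivity
        linarith
      rw [hI] at hlt ⊢
      obtain ⟨y, ⟨z, rfl⟩, hy⟩ := exists_lt_of_csInf_lt hne hlt
      exact ⟨z, hy⟩
    choose u hu using hchoose
    -- strong convexity estimate
    have quad : ∀ z w : H, ε/2 * ‖z - w‖^2 ≤ f z + f w - 2 * f ((1/2:ℝ) • (z + w)) := by
      intro z w
      obtain ⟨p, hp⟩ : ∃ p : H, p = (1/2:ℝ) • (z + w) := ⟨_, rfl⟩
      have hsum : (z - p) + (w - p) = 0 := by rw [hp]; module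
      have i1 := hsub p z
      have i2 := hsub p w
      have isum : ⟪P p - m, z - p⟫ + ⟪P p - m, w - p⟫ = 0 := by
        rw [← inner_add_right, hsum, inner_zero_right]
      have hmid : 2 * h p ≤ h z + h w := by linarith
      have hpn : ‖p‖^2 = (1/4) * ‖z + w‖^2 := by
        rw [hp, norm_smul, Real.norm_eq_abs,
          abs_of_pos (by norm_num : (0:ℝ) < 1/2)]
        ring
      have par2 : ‖z + w‖^2 + ‖z - w‖^2 = 2*(‖z‖^2 + ‖w‖^2) := by
        simpa [sq] using parallelogram_law_with_norm ℝ z w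
      have hnorm : ‖z‖^2 + ‖w‖^2 - 2 * ‖p‖^2 = (1/2) * ‖z - w‖^2 := by
        rw [hpn]; linarith
      have h6 : ε*‖z‖^2 + ε*‖w‖^2 - 2*(ε*‖p‖^2) = ε * ((1/2) * ‖z - w‖^2) := by
        rw [← hnorm]; ring
      rw [hf z, hf w, ← hp, hf p]
      nlinarith [hmid, h6]
    -- Cauchy sequence
    have hNineq : ∀ N j : ℕ, N ≤ j → f (u j) < I + 1/(N+1) := by
      intro N j hj
      refine lt_of_lt_of_le (hu j) ?_
      have : (1:ℝ)/(j+1) ≤ 1/(N+1) := by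
        apply one_div_le_one_div_of_le (by positivity)
        exact_mod_cast by omega
      linarith
    have hcauchy : CauchySeq u := by
      refine cauchySeq_of_le_tendsto_0 (fun N => Real.sqrt (4 / (ε * (N + 1)))) ?_ ?_
      · intro j k N hj hk
        have h1 := hNineq N j hj
        have h2 := hNineq N k hk
        have h3 := hI_le ((1/2:ℝ) • (u j + u k))
        have h4 := quad (u j) (u k)
        have hN : (0:ℝ) < (N:ℝ) + 1 := by positivity
        have hq : ε/2 * ‖u j - u k‖^2 ≤ 2 * (1/(N+1)) := by linarith
        have h5 : ‖u j - u k‖^2 ≤ 4 / (ε * (N+1)) := by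
          rw [le_div_iff₀ (by positivity)]
          have hmm := mul_le_mul_of_nonneg_right hq
            (by positivity : (0:ℝ) ≤ 2*((N:ℝ)+1))
          calc ‖u j - u k‖^2 * (ε * ((N:ℝ)+1))
              = (ε/2 * ‖u j - u k‖^2) * (2 * ((N:ℝ)+1)) := by ring
            _ ≤ (2 * (1/((N:ℝ)+1))) * (2*((N:ℝ)+1)) := hmm
            _ = 4 := by
                have hne0 : ((N:ℝ)+1) ≠ 0 := by positivity
                field_simp
                ring
        rw [dist_eq_norm]
        have h6 := Real.sqrt_le_sqrt h5
        rwa [Real.sqrt_sq (norm_nonneg _)] at h6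
      · have h0 : Tendsto (fun N : ℕ => 4 / (ε * ((N:ℝ) + 1))) atTop (nhds 0) := by
          have h1 : Tendsto (fun N : ℕ => (4/ε) * (1/((N:ℝ)+1))) atTop (nhds ((4/ε) * 0)) :=
            tendsto_one_div_add_atTop_nhds_zero_nat.const_mul (4/ε)
          rw [mul_zero] at h1
          refine h1.congr (fun N => ?_)
          rw [div_mul_div_comm, mul_one]
        have h2 := (Real.continuous_sqrt.tendsto 0).comp h0
        rw [Real.sqrt_zero] at h2
        exact h2.congr fun N => rfl
    obtain ⟨z0, hz0⟩ := cauchySeq_tendsto_of_complete hcauchy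
    have hfz0 : ∀ w, f z0 ≤ f w := by
      intro w
      have hlim : Tendsto (fun k => f (u k)) atTop (nhds (f z0)) :=
        (hcontf.tendsto z0).comp hz0
      have hlim2 : Tendsto (fun k : ℕ => I + 1/((k:ℝ)+1)) atTop (nhds I) := by
        have := Tendsto.add (tendsto_const_nhds : Tendsto (fun _ : ℕ => I) atTop (nhds I))
          tendsto_one_div_add_atTop_nhds_zero_nat
        simpa using this
      have hle : f z0 ≤ I :=
        le_of_tendsto_of_tendsto' hlim hlim2 (fun k => (hu k).le)
      exact le_trans hle (hI_le w)
    -- first-order condition: P z0 = m - ε • z0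
    have key : P z0 = m - ε • z0 := by
      obtain ⟨q, hq⟩ : ∃ q : H, q = P z0 - m + ε • z0 := ⟨_, rfl⟩
      have hq0 : ∀ v : H, 0 ≤ ⟪q, v⟫ := by
        intro v
        obtain ⟨w, hw⟩ : ∃ w : ℕ → H, w = fun k : ℕ => z0 + (1/((k:ℝ)+1)) • v :=
          ⟨_, rfl⟩
        have htend : Tendsto w atTop (nhds z0) := by
          have h1 : Tendsto (fun k : ℕ => (1/((k:ℝ)+1)) • v) atTop (nhds ((0:ℝ) • v)) :=
            tendsto_one_div_add_atTop_nhds_zero_nat.smul_const v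
          rw [zero_smul] at h1
          have h2 := Tendsto.add
            (tendsto_const_nhds : Tendsto (fun _ : ℕ => z0) atTop (nhds z0)) h1
          rw [hw]
          simpa using h2
        have hptend := hPcont w z0 htend
        have hineq : ∀ k : ℕ,
            0 ≤ 2*⟪P (w k) - m, v⟫ + ε * (1/((k:ℝ)+1)) * ‖v‖^2 + 2*ε*⟪z0, v⟫ := by
          intro k
          obtain ⟨τ, hτ⟩ : ∃ τ : ℝ, τ = 1/((k:ℝ)+1) := ⟨_, rfl⟩
          have hτ0 : 0 < τ := by rw [hτ]; positivity
          have i1 := hsub (w k) z0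
          have hzw : z0 - w k = -(τ • v) := by
            simp only [hw]
            rw [hτ]; abel
          rw [hzw, inner_neg_right, real_inner_smul_right] at i1
          have i2 : h z0 + ε*‖z0‖^2 ≤ h (w k) + ε*‖w k‖^2 := by
            have := hfz0 (w k)
            rw [hf, hf] at this
            exact this
          have hwn : ‖w k‖^2 = ‖z0‖^2 + 2*(τ*⟪z0, v⟫) + τ^2*‖v‖^2 := by
            simp only [hw]
            rw [← hτ, norm_add_sq_real, real_inner_smul_right, norm_smul,
              Real.norm_eq_abs, abs_of_pos hτ0]
            ring
          rw [hwn] at i2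
          have h7 : 0 ≤ τ * (2*⟪P (w k) - m, v⟫ + ε * τ * ‖v‖^2 + 2*ε*⟪z0, v⟫) := by
            nlinarith
          rw [← hτ]
          exact nonneg_of_mul_nonneg_right h7 hτ0
        have hlim : Tendsto
            (fun k => 2*⟪P (w k) - m, v⟫ + ε * (1/((k:ℝ)+1)) * ‖v‖^2 + 2*ε*⟪z0, v⟫)
            atTop (nhds (2*⟪P z0 - m, v⟫ + 0 + 2*ε*⟪z0, v⟫)) := by
          have hi : Tendsto (fun k => ⟪P (w k) - m, v⟫) atTop (nhds ⟪P z0 - m, v⟫) :=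
            (hptend.sub tendsto_const_nhds).inner tendsto_const_nhds
          have ht2 : Tendsto (fun k : ℕ => ε * (1/((k:ℝ)+1)) * ‖v‖^2) atTop (nhds 0) := by
            have := (tendsto_one_div_add_atTop_nhds_zero_nat.const_mul ε).mul_const (‖v‖^2)
            simpa [mul_assoc] using this
          exact ((hi.const_mul 2).add ht2).add tendsto_const_nhds
        have hge := ge_of_tendsto' hlim hineq
        have hqv : ⟪q, v⟫ = ⟪P z0 - m, v⟫ + ε*⟪z0, v⟫ := by
          rw [hq, inner_add_left, real_inner_smul_left]
        linarith
      have hneg := hq0 (-q)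
      rw [inner_neg_right] at hneg
      have hq00 : ⟪q, q⟫ ≤ 0 := by linarith
      have hqz : q = 0 := by
        have hnn := real_inner_self_nonneg (x := q)
        exact inner_self_eq_zero.mp (le_antisymm hq00 hnn)
      rw [hq] at hqz
      rw [eq_sub_iff_add_eq, ← sub_eq_zero,
        show P z0 + ε • z0 - m = P z0 - m + ε • z0 by abel]
      exact hqz
    -- conclude
    have hb1 : ε * ‖z0‖^2 ≤ C := by
      have h1 := hfz0 0
      rw [hf 0, hf z0] at h1
      simp only [norm_zero] at h1
      have h2 := hlow z0
      rw [hC]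
      nlinarith
    have hdist : infDist m K ≤ ε * ‖z0‖ := by
      have h1 := hd_le m (P z0) (hPK z0)
      rw [key] at h1
      have hnn : ‖m - (m - ε • z0)‖ = ε * ‖z0‖ := by
        rw [sub_sub_cancel, norm_smul, Real.norm_eq_abs, abs_of_pos hε0]
      rwa [hnn] at h1
    have hsq : (ε * ‖z0‖)^2 ≤ δ^2 := by
      have h1 : (ε*‖z0‖)^2 = ε * (ε * ‖z0‖^2) := by ring
      have h2 : ε * (ε * ‖z0‖^2) ≤ ε * C := mul_le_mul_of_nonneg_left hb1 hε0.le
      have h3 : ε * C ≤ δ^2 := by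
        rw [hε, div_mul_eq_mul_div, div_le_iff₀ (by positivity)]
        nlinarith [sq_nonneg δ]
      linarith
    have hfin : ε * ‖z0‖ ≤ δ := by
      nlinarith [mul_nonneg hε0.le (norm_nonneg z0)]
    linarith
  have h0 : infDist m K = 0 := by
    by_contra hne
    have hpos : 0 < infDist m K := lt_of_le_of_ne (hdnn m) (Ne.symm hne)
    linarith [main (infDist m K / 2) (by linarith)]
  have hmP : m = P m := by
    have h1 := hPd m
    rw [h0] at h1
    have h2 : m - P m = 0 := by simpa [norm_eq_zero] using h1
    exact sub_eq_zero.mp h2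
  rw [hmP]
  exact hPK m
end

section
/- Every weakly closed Chebyshev set in a real Hilbert space is convex. -/
open Metric Filter Set InnerProductSpace Topology

local notation "⟪" x ", " y "⟫" => @inner ℝ _ _ x y

section Aux

variable {H : Type*} [NormedAddCommGroup H] [InnerProductSpace ℝ H] [CompleteSpace H]

set_option linter.unusedSectionVars false

lemma weak_inner_continuous (w : H) :
    Continuous fun y : WeakSpace ℝ H => ⟪((toWeakSpace ℝ H).symm y : H), w⟫ := by
  have h := WeakBilin.eval_continuous (topDualPairing ℝ H).flip (toDual ℝ H w)
  have he : (fun y : WeakSpace ℝ H => ⟪((toWeakSpace ℝ H).symm y : H), w⟫)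
      = fun y : WeakSpace ℝ H => (topDualPairing ℝ H).flip y (toDual ℝ H w) := by
    funext y
    show ⟪((toWeakSpace ℝ H).symm y : H), w⟫ = toDual ℝ H w ((toWeakSpace ℝ H).symm y)
    rw [InnerProductSpace.toDual_apply_apply, real_inner_comm]
  rw [he]; exact h

lemma weak_isCompact_closedBall (c : H) (R : ℝ) :
    IsCompact (toWeakSpace ℝ H '' Metric.closedBall c R) := by
  have hcont : Continuous fun f : WeakDual ℝ H =>
      (toWeakSpace ℝ H ((toDual ℝ H).symm f) : WeakSpace ℝ H) := by
    apply WeakBilin.continuous_of_continuous_eval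
    intro g
    have he : (fun f : WeakDual ℝ H =>
        (topDualPairing ℝ H).flip (toWeakSpace ℝ H ((toDual ℝ H).symm f)) g)
        = fun f : WeakDual ℝ H => f ((toDual ℝ H).symm g) := by
      funext f
      show g ((toDual ℝ H).symm f) = f ((toDual ℝ H).symm g)
      conv_lhs => rw [← (toDual ℝ H).apply_symm_apply g]
      conv_rhs => rw [← (toDual ℝ H).apply_symm_apply f]
      rw [InnerProductSpace.toDual_apply_apply]; erw [InnerProductSpace.toDual_apply_apply]; rw [real_inner_comm]
    rw [he]
    exact WeakDual.eval_continuous _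
  have hBA := WeakDual.isCompact_closedBall (𝕜 := ℝ) (E := H) (toDual ℝ H c) R
  have himg := hBA.image hcont
  convert himg using 1
  ext y
  constructor
  · rintro ⟨x, hx, rfl⟩
    refine ⟨StrongDual.toWeakDual (toDual ℝ H x), ?_, by exact (toDual ℝ H).symm_apply_apply x⟩
    show dist (toDual ℝ H x) (toDual ℝ H c) ≤ R
    rwa [(toDual ℝ H).dist_map, ← mem_closedBall]
  · rintro ⟨f, hf, rfl⟩
    refine ⟨(toDual ℝ H).symm f, ?_, rfl⟩
    have h2 : dist (toDual ℝ H ((toDual ℝ H).symm f)) (toDual ℝ H c) ≤ R := by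
      erw [(toDual ℝ H).apply_symm_apply]; exact hf
    rwa [(toDual ℝ H).dist_map, ← mem_closedBall] at h2

lemma aux_psi_lb (a b m x : H) (s t dx : ℝ) (hs : 0 ≤ s) (ht : 0 ≤ t) (hst : s + t = 1)
    (hm : m = s • a + t • b) (hdx0 : 0 ≤ dx) (hda : dx ≤ ‖x - a‖) (hdb : dx ≤ ‖x - b‖) :
    ‖m‖^2 - max (‖a‖^2) (‖b‖^2) ≤ ‖x - m‖^2 - dx^2 := by
  have ham : a - m = t • (a - b) := by
    rw [hm]
    have : s = 1 - t := by linarith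
    rw [this]; module
  have hbm : b - m = -(s • (a - b)) := by
    rw [hm]
    have : t = 1 - s := by linarith
    rw [this]; module
  rcases le_or_gt 0 (⟪x, a - b⟫) with hx | hx
  · have h1 : dx^2 ≤ ‖x - a‖^2 := by nlinarith
    have h2 : ‖x - m‖^2 - ‖x - a‖^2 = 2*⟪x, a - m⟫ + ‖m‖^2 - ‖a‖^2 := by
      rw [norm_sub_sq_real, norm_sub_sq_real, inner_sub_right]; ring
    have h3 : ⟪x, a - m⟫ = t * ⟪x, a - b⟫ := by rw [ham, real_inner_smul_right]
    have h4 : ‖a‖^2 ≤ max (‖a‖^2) (‖b‖^2) := le_max_left _ _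
    nlinarith [mul_nonneg ht hx]
  · have h1 : dx^2 ≤ ‖x - b‖^2 := by nlinarith
    have h2 : ‖x - m‖^2 - ‖x - b‖^2 = 2*⟪x, b - m⟫ + ‖m‖^2 - ‖b‖^2 := by
      rw [norm_sub_sq_real, norm_sub_sq_real, inner_sub_right]; ring
    have h3 : ⟪x, b - m⟫ = -(s * ⟪x, a - b⟫) := by
      rw [hbm, inner_neg_right, real_inner_smul_right]
    have h4 : ‖b‖^2 ≤ max (‖a‖^2) (‖b‖^2) := le_max_right _ _
    nlinarith [mul_nonneg hs (neg_nonneg.mpr hx.le)]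

lemma aux_sub (m x y p : H) (dx dy : ℝ) (hdx0 : 0 ≤ dx) (hdx : dx ≤ ‖x - p‖)
    (hdy : dy = ‖y - p‖) :
    (‖y - m‖^2 - dy^2) - (‖x - m‖^2 - dx^2) ≤ 2*⟪y - x, p - m⟫ := by
  have h1 : dx^2 ≤ ‖x - p‖^2 := by nlinarith
  have e1 : ‖y - m‖^2 = ‖y‖^2 - 2*⟪y, m⟫ + ‖m‖^2 := by rw [norm_sub_sq_real]; try ring
  have e2 : ‖x - m‖^2 = ‖x‖^2 - 2*⟪x, m⟫ + ‖m‖^2 := by rw [norm_sub_sq_real]; try ring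
  have e3 : ‖y - p‖^2 = ‖y‖^2 - 2*⟪y, p⟫ + ‖p‖^2 := by rw [norm_sub_sq_real]; try ring
  have e4 : ‖x - p‖^2 = ‖x‖^2 - 2*⟪x, p⟫ + ‖p‖^2 := by rw [norm_sub_sq_real]; try ring
  have e5 : ⟪y - x, p - m⟫ = ⟪y, p⟫ - ⟪y, m⟫ - ⟪x, p⟫ + ⟪x, m⟫ := by
    simp [inner_sub_left, inner_sub_right]; ring
  rw [hdy]
  linarith

lemma aux_gle (m k z x : H) (ε dx : ℝ) (hε : 0 ≤ ε) (hdx0 : 0 ≤ dx) (hdx : dx ≤ ‖x - k‖) :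
    2*⟪x, k - m⟫ + 2*ε*⟪x, z⟫ + (‖m‖^2 - ‖k‖^2 - ε*(2*⟪m, z⟫ + ‖z‖^2)) ≤
      (‖x - m‖^2 - dx^2) + ε*‖x - m‖^2 := by
  have h1 : dx^2 ≤ ‖x - k‖^2 := by nlinarith
  have e1 : 2*⟪x, k - m⟫ + ‖m‖^2 - ‖k‖^2 = ‖x - m‖^2 - ‖x - k‖^2 := by
    rw [norm_sub_sq_real, norm_sub_sq_real, inner_sub_right]; ring
  have h2 : 0 ≤ ‖x - m‖^2 - 2*⟪x - m, z⟫ + ‖z‖^2 := by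
    have e : ‖(x - m) - z‖^2 = ‖x - m‖^2 - 2*⟪x - m, z⟫ + ‖z‖^2 := by
      rw [norm_sub_sq_real]; try ring
    rw [← e]; positivity
  have e2 : ⟪x - m, z⟫ = ⟪x, z⟫ - ⟪m, z⟫ := by rw [inner_sub_left]
  nlinarith [mul_nonneg hε h2]

lemma aux_geq (m x p : H) (ε dx : ℝ) (hdx : dx = ‖x - p‖) :
    (‖x - m‖^2 - dx^2) + ε*‖x - m‖^2 =
      2*⟪x, p - m⟫ + 2*ε*⟪x, x - m⟫ + (‖m‖^2 - ‖p‖^2 - ε*(2*⟪m, x - m⟫ + ‖x - m‖^2)) := by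
  rw [hdx]
  have e1 : ‖x - m‖^2 = ‖x‖^2 - 2*⟪x, m⟫ + ‖m‖^2 := by rw [norm_sub_sq_real]; try ring
  have e2 : ‖x - p‖^2 = ‖x‖^2 - 2*⟪x, p⟫ + ‖p‖^2 := by rw [norm_sub_sq_real]; try ring
  have e3 : ⟪x, p - m⟫ = ⟪x, p⟫ - ⟪x, m⟫ := inner_sub_right _ _ _
  have e4 : ⟪x, x - m⟫ = ‖x‖^2 - ⟪x, m⟫ := by
    rw [inner_sub_right, real_inner_self_eq_norm_sq]
  have e5 : ⟪m, x - m⟫ = ⟪x, m⟫ - ‖m‖^2 := by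
    rw [inner_sub_right, real_inner_self_eq_norm_sq, real_inner_comm]
  rw [e1, e2, e3, e4, e5]; ring

end Aux

set_option maxHeartbeats 1600000 in
/-- Every weakly closed Chebyshev set in a real Hilbert space is convex. -/
theorem stmt_3 {H : Type*} [NormedAddCommGroup H] [InnerProductSpace ℝ H] [CompleteSpace H]
    (K : Set H)
    (hKw : IsClosed ((toWeakSpace ℝ H) '' K))
    (hcheb : ∀ x : H, ∃! v, v ∈ K ∧ ‖x - v‖ = infDist x K) :
    Convex ℝ K := by
  classical
  have hinj : Function.Injective (toWeakSpace ℝ H) := (toWeakSpace ℝ H).injective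
  -- K is closed in the norm topology
  have hKc : IsClosed K := by
    have h1 := hKw.preimage (toWeakSpaceCLM ℝ H).continuous
    have h2 : (toWeakSpaceCLM ℝ H) ⁻¹' (toWeakSpace ℝ H '' K) = K := by
      ext x
      simp only [Set.mem_preimage, toWeakSpaceCLM_eq_toWeakSpace]
      exact ⟨fun ⟨y, hy, hxy⟩ => hinj hxy ▸ hy, fun hx => ⟨x, hx, rfl⟩⟩
    rwa [h2] at h1
  -- the projection map
  choose P hP using fun z : H => (hcheb z).exists
  have hPu : ∀ z v, v ∈ K → ‖z - v‖ = infDist z K → v = P z :=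
    fun z v hv hnorm => (hcheb z).unique ⟨hv, hnorm⟩ ⟨(hP z).1, (hP z).2⟩
  have hdle : ∀ (z k : H), k ∈ K → infDist z K ≤ ‖z - k‖ := fun z k hk => by
    simpa [dist_eq_norm] using Metric.infDist_le_dist_of_mem hk
  have hd0 : ∀ z : H, 0 ≤ infDist z K := fun z => Metric.infDist_nonneg
  have hdlip : ∀ z w : H, infDist z K ≤ infDist w K + ‖z - w‖ := fun z w => by
    simpa [dist_eq_norm] using Metric.infDist_le_infDist_add_dist (x := z) (y := w) (s := K)
  -- weak sequential continuity of the projection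
  have projWeak : ∀ (z : H) (zs : ℕ → H), Tendsto zs atTop (𝓝 z) → ∀ u : H,
      Tendsto (fun n => ⟪P (zs n), u⟫) atTop (𝓝 ⟪P z, u⟫) := by
    intro z zs hzs u
    set R : ℝ := ‖z‖ + infDist z K + 2 with hR
    set f : ℕ → WeakSpace ℝ H := fun n => toWeakSpace ℝ H (P (zs n)) with hf
    have hnear : Tendsto (fun n => ‖zs n - z‖) atTop (𝓝 0) :=
      (tendsto_iff_norm_sub_tendsto_zero).mp hzs
    have hdzn : Tendsto (fun n => infDist (zs n) K) atTop (𝓝 (infDist z K)) :=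
      ((continuous_infDist_pt K).tendsto z).comp hzs
    have hmem : ∀ᶠ n in atTop, f n ∈ toWeakSpace ℝ H '' Metric.closedBall (0 : H) R := by
      have h1 : ∀ᶠ n in atTop, ‖zs n - z‖ < 1 := hnear.eventually (gt_mem_nhds one_pos)
      have h2 : ∀ᶠ n in atTop, infDist (zs n) K < infDist z K + 1 :=
        hdzn.eventually (gt_mem_nhds (lt_add_one _))
      filter_upwards [h1, h2] with n hn1 hn2
      refine ⟨P (zs n), ?_, rfl⟩
      rw [mem_closedBall, dist_zero_right]
      have e1 : ‖P (zs n)‖ = ‖zs n - (zs n - P (zs n))‖ := by rw [sub_sub_cancel]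
      have e2 : ‖zs n - (zs n - P (zs n))‖ ≤ ‖zs n‖ + ‖zs n - P (zs n)‖ := norm_sub_le _ _
      have e3 : ‖zs n - P (zs n)‖ = infDist (zs n) K := (hP (zs n)).2
      have e4 : ‖zs n‖ - ‖z‖ ≤ ‖zs n - z‖ := norm_sub_norm_le _ _
      rw [hR]; linarith
    have hweak : Tendsto f atTop (𝓝 (toWeakSpace ℝ H (P z))) := by
      apply (weak_isCompact_closedBall (0 : H) R).tendsto_nhds_of_unique_mapClusterPt hmem
      rintro y' ⟨q, hqball, rfl⟩ hcl
      have hmaple : map f atTop ≤ 𝓟 (toWeakSpace ℝ H '' K) :=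
        le_principal_iff.mpr (eventually_map.mpr
          (Eventually.of_forall fun n => ⟨P (zs n), (hP (zs n)).1, rfl⟩))
      have hqK : q ∈ K := by
        have h1 : ClusterPt (toWeakSpace ℝ H q) (𝓟 (toWeakSpace ℝ H '' K)) :=
          ClusterPt.mono hcl hmaple
        have h2 := mem_closure_iff_clusterPt.mpr h1
        rw [hKw.closure_eq] at h2
        obtain ⟨q', hq', heq⟩ := h2
        rwa [← hinj heq]
      set F := 𝓝 (toWeakSpace ℝ H q) ⊓ map f atTop with hFdef
      haveI hne : F.NeBot := hcl
      have hF2 : F ≤ map f atTop := by rw [hFdef]; exact inf_le_right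
      have hF1 : F ≤ 𝓝 (toWeakSpace ℝ H q) := by rw [hFdef]; exact inf_le_left
      have hzq2 : ∀ ε : ℝ, 0 < ε → ⟪z - q, z - q⟫ ≤ (infDist z K + ε) * ‖z - q‖ := by
        intro ε hε
        have hnorm : ∀ᶠ n in atTop, ‖z - P (zs n)‖ ≤ infDist z K + ε := by
          have hlim : Tendsto (fun n => ‖zs n - z‖ + infDist (zs n) K) atTop
              (𝓝 (0 + infDist z K)) := hnear.add hdzn
          rw [zero_add] at hlim
          have hev := hlim.eventually (gt_mem_nhds (lt_add_of_pos_right _ hε))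
          filter_upwards [hev] with n hn
          have t1 : dist z (P (zs n)) ≤ dist z (zs n) + dist (zs n) (P (zs n)) :=
            dist_triangle _ _ _
          rw [dist_eq_norm, dist_eq_norm, dist_eq_norm] at t1
          have t2 : ‖z - zs n‖ = ‖zs n - z‖ := norm_sub_rev _ _
          have t3 : ‖zs n - P (zs n)‖ = infDist (zs n) K := (hP (zs n)).2
          linarith
        have hevA : ∀ᶠ n in atTop, ⟪z - P (zs n), z - q⟫ ≤ (infDist z K + ε) * ‖z - q‖ := by
          filter_upwards [hnorm] with n hn
          calc ⟪z - P (zs n), z - q⟫ ≤ ‖z - P (zs n)‖ * ‖z - q‖ := real_inner_le_norm _ _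
            _ ≤ (infDist z K + ε) * ‖z - q‖ :=
              mul_le_mul_of_nonneg_right hn (norm_nonneg _)
        have hevF : ∀ᶠ v in F, ⟪z - ((toWeakSpace ℝ H).symm v : H), z - q⟫ ≤
            (infDist z K + ε) * ‖z - q‖ := by
          apply Eventually.filter_mono hF2
          rw [eventually_map]
          simpa [hf] using hevA
        have hc : Continuous fun v : WeakSpace ℝ H =>
            ⟪z - ((toWeakSpace ℝ H).symm v : H), z - q⟫ := by
          simp only [inner_sub_left]; exact
            (continuous_const.sub (weak_inner_continuous (H := H) (z - q)))
        have hlimF : Tendsto (fun v : WeakSpace ℝ H =>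
            ⟪z - ((toWeakSpace ℝ H).symm v : H), z - q⟫) F (𝓝 ⟪z - q, z - q⟫) := by
          have h' := hc.continuousAt (x := toWeakSpace ℝ H q)
          have h'' : ⟪z - ((toWeakSpace ℝ H).symm (toWeakSpace ℝ H q) : H), z - q⟫
              = ⟪z - q, z - q⟫ := by simp
          rw [ContinuousAt, h''] at h'
          exact h'.mono_left hF1
        exact le_of_tendsto hlimF hevF
      have hzq : ‖z - q‖ ≤ infDist z K := by
        rcases eq_or_lt_of_le (norm_nonneg (z - q)) with h0 | h0
        · rw [← h0]; exact hd0 z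
        · have h1 : ∀ ε : ℝ, 0 < ε → ‖z - q‖ ≤ infDist z K + ε := by
            intro ε hε
            have h2 := hzq2 ε hε
            rw [real_inner_self_eq_norm_mul_norm] at h2
            exact le_of_mul_le_mul_right (by linarith) h0
          exact le_of_forall_pos_le_add h1
      have hfinal : q = P z := hPu z q hqK (le_antisymm hzq (hdle z q hqK))
      rw [hfinal]
    have hcAt := (weak_inner_continuous (H := H) u).continuousAt
      (x := toWeakSpace ℝ H (P z))
    have hcomp := hcAt.tendsto.comp hweak
    simpa [hf, Function.comp_def] using hcomp
  -- now prove convexity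
  rw [convex_iff_forall_pos]
  intro a ha b hb s t hs ht hst
  obtain rfl : s = 1 - t := by linarith
  set m : H := (1 - t) • a + t • b with hm
  show m ∈ K
  set B : ℝ := ‖m‖^2 - max (‖a‖^2) (‖b‖^2) with hB
  have hψlb : ∀ x : H, B ≤ ‖x - m‖^2 - infDist x K^2 := fun x =>
    aux_psi_lb a b m x (1 - t) t (infDist x K) hs.le ht.le (by ring) hm (hd0 x)
      (hdle x a ha) (hdle x b hb)
  have hB0 : B ≤ 0 := by
    have h1 := hψlb m
    have h2 : (0:ℝ) ≤ infDist m K^2 := sq_nonneg _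
    simp only [sub_self, norm_zero] at h1
    nlinarith
  -- key step: for every ε > 0 there is a point of K within √(ε(1-B)) of m
  have key : ∀ ε : ℝ, 0 < ε → ∃ k ∈ K, ‖k - m‖ ≤ Real.sqrt (ε * (1 - B)) := by
    intro ε hε
    set R : ℝ := Real.sqrt ((1 - B)/ε) with hRdef
    have hR0 : 0 ≤ R := Real.sqrt_nonneg _
    have hR2 : R^2 = (1 - B)/ε := Real.sq_sqrt (div_nonneg (by linarith) hε.le)
    set Φ : H → ℝ := fun x => (‖x - m‖^2 - infDist x K^2) + ε*‖x - m‖^2 with hΦ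
    have hΦlb : ∀ x : H, B ≤ Φ x := by
      intro x
      have h1 := hψlb x
      have h2 : 0 ≤ ε*‖x - m‖^2 := by positivity
      simp only [hΦ]; linarith
    have hΦm : Φ m ≤ 0 := by
      simp only [hΦ, sub_self, norm_zero]
      nlinarith [sq_nonneg (infDist m K)]
    have hbdd : BddBelow (Φ '' Metric.closedBall m R) := by
      refine ⟨B, ?_⟩
      rintro _ ⟨x, -, rfl⟩
      exact hΦlb x
    have hVne : (Φ '' Metric.closedBall m R).Nonempty :=
      ⟨Φ m, m, mem_closedBall_self hR0, rfl⟩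
    set c : ℝ := sInf (Φ '' Metric.closedBall m R) with hc
    set g : H → H → H → ℝ := fun k z x =>
      2*⟪x, k - m⟫ + 2*ε*⟪x, z⟫ + (‖m‖^2 - ‖k‖^2 - ε*(2*⟪m, z⟫ + ‖z‖^2)) with hg
    have hgle : ∀ (k : H), k ∈ K → ∀ z x : H, g k z x ≤ Φ x := by
      intro k hk z x
      simp only [hg, hΦ]
      exact aux_gle m k z x ε (infDist x K) hε.le (hd0 x) (hdle x k hk)
    have hgeq : ∀ x : H, Φ x = g (P x) (x - m) x := by
      intro x
      simp only [hg, hΦ]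
      exact aux_geq m x (P x) ε (infDist x K) (hP x).2.symm
    set T : ℕ → Set (WeakSpace ℝ H) := fun n =>
      {y | (∀ w : H, ‖w‖ ≤ 1 → ⟪((toWeakSpace ℝ H).symm y : H) - m, w⟫ ≤ R) ∧
        ∀ k ∈ K, ∀ z : H, g k z ((toWeakSpace ℝ H).symm y) ≤ c + 1/(n+1)} with hT
    have hball : ∀ y : WeakSpace ℝ H,
        (∀ w : H, ‖w‖ ≤ 1 → ⟪((toWeakSpace ℝ H).symm y : H) - m, w⟫ ≤ R) →
        ((toWeakSpace ℝ H).symm y : H) ∈ Metric.closedBall m R := by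
      intro y hy
      rw [mem_closedBall, dist_eq_norm]
      set x : H := ((toWeakSpace ℝ H).symm y : H)
      rcases eq_or_ne (x - m) 0 with h0 | h0
      · rw [h0, norm_zero]; exact hR0
      · have hnz : 0 < ‖x - m‖ := norm_pos_iff.mpr h0
        have h1 := hy (‖x - m‖⁻¹ • (x - m)) (by
          rw [norm_smul, norm_inv, norm_norm, inv_mul_cancel₀ hnz.ne'])
        rw [real_inner_smul_right, real_inner_self_eq_norm_mul_norm] at h1
        calc ‖x - m‖ = ‖x - m‖⁻¹ * (‖x - m‖ * ‖x - m‖) := by field_simp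
          _ ≤ R := h1
    have hTsub : ∀ n, T n ⊆ toWeakSpace ℝ H '' Metric.closedBall m R := by
      intro n y hy
      exact ⟨((toWeakSpace ℝ H).symm y : H), hball y hy.1, by simp⟩
    have hTcl : ∀ n, IsClosed (T n) := by
      intro n
      have h1 : IsClosed {y : WeakSpace ℝ H |
          ∀ w : H, ‖w‖ ≤ 1 → ⟪((toWeakSpace ℝ H).symm y : H) - m, w⟫ ≤ R} := by
        rw [setOf_forall]
        refine isClosed_iInter fun w => ?_
        rcases le_or_gt ‖w‖ 1 with hw | hw
        · have e : {y : WeakSpace ℝ H | ‖w‖ ≤ 1 →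
              ⟪((toWeakSpace ℝ H).symm y : H) - m, w⟫ ≤ R} =
              {y : WeakSpace ℝ H | ⟪((toWeakSpace ℝ H).symm y : H) - m, w⟫ ≤ R} := by
            ext y; simp [hw]
          rw [e]
          apply isClosed_le _ continuous_const
          simp only [inner_sub_left]; exact
            ((weak_inner_continuous (H := H) w).sub continuous_const)
        · have e : {y : WeakSpace ℝ H | ‖w‖ ≤ 1 →
              ⟪((toWeakSpace ℝ H).symm y : H) - m, w⟫ ≤ R} = univ := by
            ext y; simp [not_le.mpr hw]
          rw [e]; exact isClosed_univ
      have h2 : IsClosed {y : WeakSpace ℝ H |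
          ∀ k ∈ K, ∀ z : H, g k z ((toWeakSpace ℝ H).symm y) ≤ c + 1/(n+1)} := by
        rw [setOf_forall]
        refine isClosed_iInter fun k => ?_
        rcases em (k ∈ K) with hk | hk
        · have e : {y : WeakSpace ℝ H | k ∈ K →
              ∀ z : H, g k z ((toWeakSpace ℝ H).symm y) ≤ c + 1/(n+1)} =
              ⋂ z : H, {y : WeakSpace ℝ H |
                g k z ((toWeakSpace ℝ H).symm y) ≤ c + 1/(n+1)} := by
            ext y; simp [hk, mem_iInter]
          rw [e]
          refine isClosed_iInter fun z => ?_
          apply isClosed_le _ continuous_const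
          have hcont : Continuous fun y : WeakSpace ℝ H =>
              2*⟪((toWeakSpace ℝ H).symm y : H), k - m⟫ +
                2*ε*⟪((toWeakSpace ℝ H).symm y : H), z⟫ +
                (‖m‖^2 - ‖k‖^2 - ε*(2*⟪m, z⟫ + ‖z‖^2)) :=
            ((continuous_const.mul (weak_inner_continuous (k - m))).add
              (continuous_const.mul (weak_inner_continuous z))).add continuous_const
          simpa only [hg] using hcont
        · have e : {y : WeakSpace ℝ H | k ∈ K →
              ∀ z : H, g k z ((toWeakSpace ℝ H).symm y) ≤ c + 1/(n+1)} = univ := by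
            ext y; simp [hk]
          rw [e]; exact isClosed_univ
      have e : T n = {y : WeakSpace ℝ H |
          ∀ w : H, ‖w‖ ≤ 1 → ⟪((toWeakSpace ℝ H).symm y : H) - m, w⟫ ≤ R} ∩
          {y : WeakSpace ℝ H |
          ∀ k ∈ K, ∀ z : H, g k z ((toWeakSpace ℝ H).symm y) ≤ c + 1/(n+1)} := rfl
      rw [e]
      exact h1.inter h2
    have hTne : ∀ n, (T n).Nonempty := by
      intro n
      have hlt : c < c + 1/(n+1) := by
        have h0 : (0:ℝ) < 1/(n+1) := by positivity
        linarith
      obtain ⟨_, ⟨x, hx, rfl⟩, hxlt⟩ := exists_lt_of_csInf_lt hVne hlt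
      refine ⟨toWeakSpace ℝ H x, ?_, ?_⟩
      · intro w hw
        have h1 : (((toWeakSpace ℝ H).symm (toWeakSpace ℝ H x) : H)) = x := by simp
        rw [h1]
        calc ⟪x - m, w⟫ ≤ ‖x - m‖ * ‖w‖ := real_inner_le_norm _ _
          _ ≤ R * 1 := by
            apply mul_le_mul _ hw (norm_nonneg _) hR0
            rwa [mem_closedBall, dist_eq_norm] at hx
          _ = R := mul_one R
      · intro k hk z
        have h1 : (((toWeakSpace ℝ H).symm (toWeakSpace ℝ H x) : H)) = x := by simp
        rw [h1]
        exact (hgle k hk z x).trans hxlt.le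
    have hTmono : ∀ n, T (n+1) ⊆ T n := by
      intro n y hy
      refine ⟨hy.1, fun k hk z => (hy.2 k hk z).trans ?_⟩
      have h1 : (1:ℝ)/(↑(n+1)+1) ≤ 1/(↑n+1) := by
        apply one_div_le_one_div_of_le (by positivity)
        push_cast; linarith
      push_cast at h1 ⊢
      linarith
    have hT0 : IsCompact (T 0) :=
      (weak_isCompact_closedBall m R).of_isClosed_subset (hTcl 0) (hTsub 0)
    obtain ⟨y0, hy0⟩ := IsCompact.nonempty_iInter_of_sequence_nonempty_isCompact_isClosed
      T hTmono hTne hT0 hTcl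
    set xb : H := ((toWeakSpace ℝ H).symm y0 : H) with hxb
    have hy0n : ∀ n : ℕ, y0 ∈ T n := fun n => mem_iInter.mp hy0 n
    have hxbV : xb ∈ Metric.closedBall m R := hball y0 (hy0n 0).1
    have hxbc : Φ xb ≤ c := by
      have h1 : ∀ n : ℕ, Φ xb ≤ c + 1/(n+1) := by
        intro n
        rw [hgeq xb]
        exact (hy0n n).2 (P xb) (hP xb).1 (xb - m)
      apply le_of_forall_pos_le_add
      intro δ hδ
      obtain ⟨n, hn⟩ := exists_nat_one_div_lt hδ
      exact (h1 n).trans (add_le_add_right hn.le c)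
    have hxbmin : ∀ y : H, Φ xb ≤ Φ y := by
      intro y
      by_cases hy : y ∈ Metric.closedBall m R
      · exact hxbc.trans (csInf_le hbdd ⟨y, hy, rfl⟩)
      · have hy' : R < ‖y - m‖ := by
          rw [mem_closedBall, dist_eq_norm, not_le] at hy; exact hy
        have h1 : 1 - B ≤ ε*‖y - m‖^2 := by
          have e : ε * R^2 = 1 - B := by rw [hR2]; field_simp
          rw [← e]
          apply mul_le_mul_of_nonneg_left _ hε.le
          nlinarith [hy', hR0]
        have h2 : 1 ≤ Φ y := by
          have h3 := hψlb y
          simp only [hΦ]; linarith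
        have hcm : c ≤ Φ m := csInf_le hbdd ⟨m, mem_closedBall_self hR0, rfl⟩
        linarith
    -- first-order condition at the minimizer
    have hineq : ∀ u : H, 0 ≤ ⟪P xb, u⟫ - ⟪m, u⟫ + ε * ⟪xb - m, u⟫ := by
      intro u
      have hstep : ∀ n : ℕ, 0 ≤ ⟪P (xb + (1/(n+1:ℝ)) • u), u⟫ - ⟪m, u⟫ + ε * ⟪xb - m, u⟫
          + (1/(n+1:ℝ)) * (ε/2*‖u‖^2) := by
        intro n
        set τ : ℝ := 1/(n+1:ℝ) with hτ
        have hτpos : 0 < τ := by rw [hτ]; positivity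
        set y : H := xb + τ • u with hy
        have h0 : Φ xb ≤ Φ y := hxbmin y
        have h1 : (‖y - m‖^2 - infDist y K^2) - (‖xb - m‖^2 - infDist xb K^2) ≤
            2*⟪y - xb, P y - m⟫ :=
          aux_sub m xb y (P y) (infDist xb K) (infDist y K) (hd0 xb)
            (hdle xb (P y) (hP y).1) (hP y).2.symm
        have h2 : ‖y - m‖^2 = ‖xb - m‖^2 + 2*τ*⟪xb - m, u⟫ + τ^2*‖u‖^2 := by
          have e : y - m = (xb - m) + τ • u := by rw [hy]; abel
          rw [e, norm_add_sq_real, real_inner_smul_right, norm_smul]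
          simp only [Real.norm_eq_abs, abs_of_pos hτpos, mul_pow]
          ring
        have h3 : ⟪y - xb, P y - m⟫ = τ * ⟪P y - m, u⟫ := by
          have e : y - xb = τ • u := by rw [hy]; abel
          rw [e, real_inner_smul_left, real_inner_comm]
        have h4 : ⟪P y - m, u⟫ = ⟪P y, u⟫ - ⟪m, u⟫ := by rw [inner_sub_left]
        have h4' : 2*⟪y - xb, P y - m⟫ = 2*τ*(⟪P y, u⟫ - ⟪m, u⟫) := by
          rw [h3, h4]; ring
        rw [h4'] at h1
        have h5 : Φ y - Φ xb ≤ 2*τ*(⟪P y, u⟫ - ⟪m, u⟫) +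
            ε*(2*τ*⟪xb - m, u⟫ + τ^2*‖u‖^2) := by
          simp only [hΦ]
          rw [h2] at h1 ⊢
          linarith
        have h6 : 0 ≤ 2*τ*(⟪P y, u⟫ - ⟪m, u⟫) + ε*(2*τ*⟪xb - m, u⟫ + τ^2*‖u‖^2) := by
          linarith
        nlinarith [h6, hτpos]
      have hz : Tendsto (fun n : ℕ => xb + (1/(n+1:ℝ)) • u) atTop (𝓝 xb) := by
        have h1 : Tendsto (fun n : ℕ => (1/(n+1:ℝ))) atTop (𝓝 0) :=
          tendsto_one_div_add_atTop_nhds_zero_nat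
        have h2 := h1.smul_const u
        rw [zero_smul] at h2
        have h3 := (tendsto_const_nhds (x := xb) (f := atTop)).add h2
        rw [add_zero] at h3
        exact h3
      have hlim1 := projWeak xb _ hz u
      have hlim2 : Tendsto (fun n : ℕ => ⟪P (xb + (1/(n+1:ℝ)) • u), u⟫ - ⟪m, u⟫
          + ε * ⟪xb - m, u⟫ + (1/(n+1:ℝ)) * (ε/2*‖u‖^2)) atTop
          (𝓝 (⟪P xb, u⟫ - ⟪m, u⟫ + ε * ⟪xb - m, u⟫ + 0 * (ε/2*‖u‖^2))) :=
        ((hlim1.sub_const _).add_const _).add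
          (tendsto_one_div_add_atTop_nhds_zero_nat.mul_const _)
      rw [zero_mul, add_zero] at hlim2
      exact ge_of_tendsto hlim2 (Eventually.of_forall hstep)
    -- conclude the identity and the bound
    set v : H := P xb - m + ε • (xb - m) with hv
    have hv0 : v = 0 := by
      have h := hineq (-v)
      have e1 : ⟪v, v⟫ = ⟪P xb, v⟫ - ⟪m, v⟫ + ε * ⟪xb - m, v⟫ := by
        rw [hv]
        simp only [inner_add_left, inner_sub_left, real_inner_smul_left]
        try ring
      simp only [inner_neg_right] at h
      have h2 : ⟪v, v⟫ ≤ 0 := by linarith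
      exact real_inner_self_nonpos.mp h2
    have hPxb : P xb - m = -(ε • (xb - m)) := eq_neg_of_add_eq_zero_left hv0
    have hnb : ‖P xb - m‖ = ε * ‖xb - m‖ := by
      rw [hPxb, norm_neg, norm_smul, Real.norm_eq_abs, abs_of_pos hε]
    have hxbR : ‖xb - m‖ ≤ R := by rwa [mem_closedBall, dist_eq_norm] at hxbV
    have hεR : ε * R = Real.sqrt (ε * (1 - B)) := by
      rw [hRdef, ← Real.sqrt_sq hε.le, ← Real.sqrt_mul (by positivity)]
      congr 1
      field_simp
      simp only [Real.sqrt_sq hε.le]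
      ring
    refine ⟨P xb, (hP xb).1, ?_⟩
    rw [hnb, ← hεR]
    exact mul_le_mul_of_nonneg_left hxbR hε.le
  -- conclude m ∈ K from key
  choose kf hkfK hkfb using fun n : ℕ => key (1/(n+1:ℝ)) (by positivity)
  have hsq : Tendsto (fun n : ℕ => Real.sqrt ((1/(n+1:ℝ)) * (1 - B))) atTop (𝓝 0) := by
    have h1 : Tendsto (fun n : ℕ => (1/(n+1:ℝ)) * (1 - B)) atTop (𝓝 (0 * (1 - B))) :=
      tendsto_one_div_add_atTop_nhds_zero_nat.mul_const _
    rw [zero_mul] at h1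
    have h2 := (Real.continuous_sqrt.tendsto 0).comp h1
    rwa [Real.sqrt_zero] at h2
  have hkf : Tendsto kf atTop (𝓝 m) := by
    rw [tendsto_iff_norm_sub_tendsto_zero]
    exact squeeze_zero (fun n => norm_nonneg _) (fun n => hkfb n) hsq
  exact hKc.mem_of_tendsto hkf (Eventually.of_forall hkfK)
end

section
/- Every uniformly convex Banach space is reflexive (Milman–Pettis theorem). -/
open NormedSpace Metric

/-- Approximate Helly lemma for two functionals. -/
lemma helly_aux {X : Type*} [NormedAddCommGroup X] [NormedSpace ℝ X]
    (ξ : StrongDual ℝ (StrongDual ℝ X)) (f g : StrongDual ℝ X)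
    {r τ : ℝ} (hr : ‖ξ‖ < r) (hτ : 0 < τ) :
    ∃ x : X, ‖x‖ ≤ r ∧ |f x - ξ f| < τ ∧ |g x - ξ g| < τ := by
  have hr0 : 0 < r := lt_of_le_of_lt (norm_nonneg ξ) hr
  set T : X →ₗ[ℝ] ℝ × ℝ := (f : X →ₗ[ℝ] ℝ).prod (g : X →ₗ[ℝ] ℝ) with hT
  set C : Set (ℝ × ℝ) := T '' Metric.closedBall 0 r with hC
  have hzC : (ξ f, ξ g) ∈ closure C := by
    by_contra hz
    obtain ⟨φ, u, hu, hz'⟩ := geometric_hahn_banach_closed_point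
      ((convex_closedBall (0:X) r).linear_image T).closure isClosed_closure hz
    have hub : ∀ x : X, ‖x‖ ≤ r → φ (f x, g x) < u := by
      intro x hx
      exact hu _ (subset_closure ⟨x, by simpa using hx, rfl⟩)
    have hφ : ∀ p : ℝ × ℝ, φ p = p.1 * φ (1, 0) + p.2 * φ (0, 1) := by
      intro p
      have hp : p = p.1 • ((1:ℝ), (0:ℝ)) + p.2 • ((0:ℝ), (1:ℝ)) := by
        simp [Prod.ext_iff]
      conv_lhs => rw [hp]
      rw [map_add, map_smul, map_smul]
      simp [smul_eq_mul]
    set h : StrongDual ℝ X := φ (1, 0) • f + φ (0, 1) • g with hh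
    have hhx : ∀ x : X, h x = φ (f x, g x) := by
      intro x
      simp only [hh, ContinuousLinearMap.add_apply, ContinuousLinearMap.smul_apply,
        smul_eq_mul, hφ (f x, g x)]
      ring
    have hu0 : 0 < u := by
      have := hub 0 (by simp [hr0.le])
      simpa [Prod.mk_zero_zero] using this
    have habs : ∀ x : X, ‖x‖ ≤ r → |h x| ≤ u := by
      intro x hx
      have h1 : h x < u := by rw [hhx]; exact hub x hx
      have h2 : -(h x) < u := by
        have := hub (-x) (by simpa using hx)
        rw [← hhx] at this
        simpa using this
      rw [abs_le]; constructor <;> linarith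
    have hnorm : ‖h‖ ≤ u / r := by
      refine ContinuousLinearMap.opNorm_le_bound h (div_nonneg hu0.le hr0.le) (fun x => ?_)
      rcases eq_or_ne x 0 with rfl | hx0
      · simp
      · have hxpos : 0 < ‖x‖ := norm_pos_iff.mpr hx0
        have hz : ‖(r / ‖x‖) • x‖ = r := by
          rw [norm_smul, Real.norm_eq_abs, abs_div, abs_of_pos hr0, abs_of_pos hxpos]
          field_simp
        have := habs ((r / ‖x‖) • x) hz.le
        rw [map_smul, smul_eq_mul, abs_mul, abs_div, abs_of_pos hr0, abs_of_pos hxpos] at this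
        rw [Real.norm_eq_abs]
        rw [div_mul_eq_mul_div, div_le_iff₀ hxpos] at this
        rw [div_mul_eq_mul_div, le_div_iff₀ hr0]
        nlinarith [norm_nonneg x]
    have hξh : ξ h = φ (ξ f, ξ g) := by
      simp only [hh, map_add, map_smul, smul_eq_mul, hφ (ξ f, ξ g)]
      ring
    have h1 : u < ξ h := by rw [hξh]; exact hz'
    have h2 : ξ h ≤ ‖ξ‖ * ‖h‖ := by
      calc ξ h ≤ |ξ h| := le_abs_self _
        _ ≤ ‖ξ‖ * ‖h‖ := by simpa [Real.norm_eq_abs] using ξ.le_opNorm h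
    have h3 : ‖ξ‖ * ‖h‖ ≤ ‖ξ‖ * (u / r) :=
      mul_le_mul_of_nonneg_left hnorm (norm_nonneg ξ)
    have h4 : ‖ξ‖ * (u / r) < r * (u / r) :=
      mul_lt_mul_of_pos_right hr (div_pos hu0 hr0)
    have h5 : r * (u / r) = u := by field_simp
    linarith
  rw [Metric.mem_closure_iff] at hzC
  obtain ⟨b, hb, hdist⟩ := hzC (τ) hτ
  obtain ⟨x, hx, rfl⟩ := hb
  refine ⟨x, by simpa using hx, ?_, ?_⟩
  · have := (max_lt_iff.mp (lt_of_le_of_lt (le_of_eq (Prod.dist_eq)) hdist)).1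
    rw [Real.dist_eq, abs_sub_comm] at this
    simpa [hT] using this
  · have := (max_lt_iff.mp (lt_of_le_of_lt (le_of_eq (Prod.dist_eq)) hdist)).2
    rw [Real.dist_eq, abs_sub_comm] at this
    simpa [hT] using this

/-- Normalized approximate Helly: matching two functionals on the closed unit ball. -/
lemma helly_ball {X : Type*} [NormedAddCommGroup X] [NormedSpace ℝ X]
    (ξ : StrongDual ℝ (StrongDual ℝ X)) (hξ : ‖ξ‖ = 1) (f g : StrongDual ℝ X)
    (hf : ‖f‖ ≤ 1) (hg : ‖g‖ ≤ 1) {τ : ℝ} (hτ : 0 < τ) :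
    ∃ x : X, ‖x‖ ≤ 1 ∧ |f x - ξ f| < 2 * τ ∧ |g x - ξ g| < 2 * τ := by
  obtain ⟨x', hx', hfx', hgx'⟩ := helly_aux ξ f g (r := 1 + τ) (by rw [hξ]; linarith) hτ
  have h1τ : (0:ℝ) < 1 + τ := by linarith
  refine ⟨(1 + τ)⁻¹ • x', ?_, ?_, ?_⟩
  · rw [norm_smul, Real.norm_eq_abs, abs_of_pos (inv_pos.mpr h1τ)]
    rw [inv_mul_le_iff₀ h1τ]
    simpa using hx'
  · have key : ∀ h : StrongDual ℝ X, ‖h‖ ≤ 1 → |h x' - ξ h| < τ →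
        |h ((1 + τ)⁻¹ • x') - ξ h| < 2 * τ := by
      intro h hh hhx
      have hval : |h x'| ≤ 1 + τ := by
        calc |h x'| ≤ ‖h‖ * ‖x'‖ := by simpa [Real.norm_eq_abs] using h.le_opNorm x'
          _ ≤ 1 * (1 + τ) := mul_le_mul hh hx' (norm_nonneg _) zero_le_one
          _ = 1 + τ := one_mul _
      have heq : h ((1 + τ)⁻¹ • x') = (1 + τ)⁻¹ * h x' := by
        rw [map_smul, smul_eq_mul]
      have hdiff : |h ((1 + τ)⁻¹ • x') - h x'| ≤ τ := by
        rw [heq]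
        have : (1 + τ)⁻¹ * h x' - h x' = -(τ / (1 + τ)) * h x' := by field_simp; ring
        rw [this, abs_mul, abs_neg, abs_div, abs_of_pos hτ, abs_of_pos h1τ]
        rw [div_mul_eq_mul_div, div_le_iff₀ h1τ]
        nlinarith [abs_nonneg (h x')]
      calc |h ((1 + τ)⁻¹ • x') - ξ h| ≤ |h ((1 + τ)⁻¹ • x') - h x'| + |h x' - ξ h| := by
            have := abs_sub_le (h ((1 + τ)⁻¹ • x')) (h x') (ξ h); linarith
        _ < τ + τ := by linarith
        _ = 2 * τ := by ring
    exact key f hf hfx'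
  · have key : ∀ h : StrongDual ℝ X, ‖h‖ ≤ 1 → |h x' - ξ h| < τ →
        |h ((1 + τ)⁻¹ • x') - ξ h| < 2 * τ := by
      intro h hh hhx
      have hval : |h x'| ≤ 1 + τ := by
        calc |h x'| ≤ ‖h‖ * ‖x'‖ := by simpa [Real.norm_eq_abs] using h.le_opNorm x'
          _ ≤ 1 * (1 + τ) := mul_le_mul hh hx' (norm_nonneg _) zero_le_one
          _ = 1 + τ := one_mul _
      have heq : h ((1 + τ)⁻¹ • x') = (1 + τ)⁻¹ * h x' := by
        rw [map_smul, smul_eq_mul]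
      have hdiff : |h ((1 + τ)⁻¹ • x') - h x'| ≤ τ := by
        rw [heq]
        have : (1 + τ)⁻¹ * h x' - h x' = -(τ / (1 + τ)) * h x' := by field_simp; ring
        rw [this, abs_mul, abs_neg, abs_div, abs_of_pos hτ, abs_of_pos h1τ]
        rw [div_mul_eq_mul_div, div_le_iff₀ h1τ]
        nlinarith [abs_nonneg (h x')]
      calc |h ((1 + τ)⁻¹ • x') - ξ h| ≤ |h ((1 + τ)⁻¹ • x') - h x'| + |h x' - ξ h| := by
            have := abs_sub_le (h ((1 + τ)⁻¹ • x')) (h x') (ξ h); linarith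
        _ < τ + τ := by linarith
        _ = 2 * τ := by ring
    exact key g hg hgx'

/-- Core approximation: a norm-one element of the bidual is approximated in norm by
elements of the canonical image, using uniform convexity. -/
lemma milman_core {X : Type*} [NormedAddCommGroup X] [NormedSpace ℝ X] [UniformConvexSpace X]
    (ξ : StrongDual ℝ (StrongDual ℝ X)) (hξ : ‖ξ‖ = 1) {ε : ℝ} (hε : 0 < ε) :
    ∃ x : X, ‖ξ - inclusionInDoubleDual ℝ X x‖ < ε := by
  obtain ⟨δ₀, hδ₀, H₀⟩ := exists_forall_closed_ball_dist_add_le_two_sub X (half_pos hε)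
  set δ : ℝ := min δ₀ 1 with hδdef
  have hδ : 0 < δ := lt_min hδ₀ zero_lt_one
  have hδ1 : δ ≤ 1 := min_le_right _ _
  have H : ∀ ⦃x : X⦄, ‖x‖ ≤ 1 → ∀ ⦃y⦄, ‖y‖ ≤ 1 → ε / 2 ≤ ‖x - y‖ → ‖x + y‖ ≤ 2 - δ := by
    intro x hx y hy hxy
    have := H₀ hx hy hxy
    have : ‖x + y‖ ≤ 2 - δ₀ := this
    have hle : δ ≤ δ₀ := min_le_left _ _
    linarith
  set τ : ℝ := min (δ / 32) (ε / 16) with hτdef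
  have hτ : 0 < τ := lt_min (by linarith) (by linarith)
  have hτδ : τ ≤ δ / 32 := min_le_left _ _
  have hτε : τ ≤ ε / 16 := min_le_right _ _
  -- find a norming functional
  obtain ⟨f, hf1, hfξ⟩ : ∃ f : StrongDual ℝ X, ‖f‖ ≤ 1 ∧ 1 - δ / 4 < ξ f := by
    by_contra hcon
    push_neg at hcon
    have hb : ‖ξ‖ ≤ 1 - δ / 4 := by
      refine ContinuousLinearMap.opNorm_le_of_unit_norm (by linarith) (fun g hg => ?_)
      rw [Real.norm_eq_abs, abs_le]
      constructor
      · have h1 := hcon (-g) (by rw [norm_neg, hg])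
        have h2 : ξ (-g) = -ξ g := by simp
        rw [h2] at h1
        linarith
      · exact hcon g (le_of_eq hg)
    rw [hξ] at hb; linarith
  obtain ⟨x₀, hx₀, hfx₀, -⟩ := helly_ball ξ hξ f f hf1 hf1 hτ
  refine ⟨x₀, ?_⟩
  have hbound : ‖ξ - inclusionInDoubleDual ℝ X x₀‖ ≤ ε / 2 + 4 * τ := by
    refine ContinuousLinearMap.opNorm_le_of_unit_norm (by linarith) (fun g hg => ?_)
    obtain ⟨x₁, hx₁, hfx₁, hgx₁⟩ := helly_ball ξ hξ f g hf1 (le_of_eq hg) hτ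
    -- both x₀, x₁ lie in the slice
    have hf0 : 1 - δ / 4 - 2 * τ < f x₀ := by
      have := abs_lt.mp hfx₀
      linarith [this.1]
    have hf1' : 1 - δ / 4 - 2 * τ < f x₁ := by
      have := abs_lt.mp hfx₁
      linarith [this.1]
    have hsum : 2 - δ < ‖x₀ + x₁‖ := by
      have hfs : 2 - δ < f (x₀ + x₁) := by
        rw [map_add]
        have : δ / 2 + 4 * τ < δ := by linarith
        linarith
      have : f (x₀ + x₁) ≤ ‖x₀ + x₁‖ := by
        calc f (x₀ + x₁) ≤ |f (x₀ + x₁)| := le_abs_self _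
          _ ≤ ‖f‖ * ‖x₀ + x₁‖ := by simpa [Real.norm_eq_abs] using f.le_opNorm (x₀ + x₁)
          _ ≤ 1 * ‖x₀ + x₁‖ := mul_le_mul_of_nonneg_right hf1 (norm_nonneg _)
          _ = ‖x₀ + x₁‖ := one_mul _
      linarith
    have hclose : ‖x₀ - x₁‖ < ε / 2 := by
      by_contra hcc
      push_neg at hcc
      have := H hx₀ hx₁ hcc
      linarith
    have hval : (ξ - inclusionInDoubleDual ℝ X x₀) g = ξ g - g x₀ := by
      simp [ContinuousLinearMap.sub_apply]
    rw [hval, Real.norm_eq_abs]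
    have h1 : |ξ g - g x₁| < 2 * τ := by
      rw [abs_sub_comm]; exact hgx₁
    have h2 : |g x₁ - g x₀| ≤ ε / 2 := by
      have heq2 : g x₁ - g x₀ = g (x₁ - x₀) := by rw [map_sub]
      rw [heq2]
      calc |g (x₁ - x₀)| ≤ ‖g‖ * ‖x₁ - x₀‖ := by
            simpa [Real.norm_eq_abs] using g.le_opNorm (x₁ - x₀)
        _ = ‖x₀ - x₁‖ := by rw [hg, one_mul, norm_sub_rev]
        _ ≤ ε / 2 := hclose.le
    calc |ξ g - g x₀| ≤ |ξ g - g x₁| + |g x₁ - g x₀| := by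
          have := abs_sub_le (ξ g) (g x₁) (g x₀); linarith
      _ ≤ 2 * τ + ε / 2 := by linarith
      _ ≤ ε / 2 + 4 * τ := by linarith
  have : ε / 2 + 4 * τ < ε := by linarith
  linarith

/-- Milman–Pettis: Every uniformly convex Banach space is reflexive. -/
theorem stmt_11 {X : Type*} [NormedAddCommGroup X] [NormedSpace ℝ X] [CompleteSpace X]
    [UniformConvexSpace X] :
    Function.Surjective (NormedSpace.inclusionInDoubleDual ℝ X) := by
  intro ξ
  have hiso : Isometry (inclusionInDoubleDual ℝ X) :=
    (inclusionInDoubleDualLi ℝ (E := X)).isometry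
  have hclosed : IsClosed (Set.range (inclusionInDoubleDual ℝ X)) :=
    hiso.isClosedEmbedding.isClosed_range
  suffices hmem : ξ ∈ closure (Set.range (inclusionInDoubleDual ℝ X)) by
    rwa [hclosed.closure_eq] at hmem
  refine (Metric.mem_closure_iff (α := StrongDual ℝ (StrongDual ℝ X))).mpr ?_
  intro ε hε
  rcases eq_or_ne ξ 0 with rfl | hξ0
  · exact ⟨inclusionInDoubleDual ℝ X 0, ⟨0, rfl⟩, by simpa using hε⟩
  · have hnorm : 0 < ‖ξ‖ := (norm_pos_iff (a := ξ)).mpr hξ0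
    haveI : NormSMulClass ℝ (StrongDual ℝ (StrongDual ℝ X)) :=
      @NormedSpace.toNormSMulClass ℝ (StrongDual ℝ (StrongDual ℝ X)) _ _ _
    have hξ' : ‖(‖ξ‖⁻¹ • ξ)‖ = 1 := by
      rw [norm_smul, Real.norm_eq_abs, abs_of_pos (inv_pos.mpr hnorm), inv_mul_cancel₀ hnorm.ne']
    obtain ⟨x, hx⟩ := milman_core (‖ξ‖⁻¹ • ξ) hξ' (div_pos hε hnorm)
    refine ⟨inclusionInDoubleDual ℝ X (‖ξ‖ • x), ⟨_, rfl⟩, ?_⟩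
    rw [show dist ξ (inclusionInDoubleDual ℝ X (‖ξ‖ • x)) = ‖ξ - inclusionInDoubleDual ℝ X (‖ξ‖ • x)‖
      from dist_eq_norm ξ (inclusionInDoubleDual ℝ X (‖ξ‖ • x))]
    have heq : ξ - inclusionInDoubleDual ℝ X (‖ξ‖ • x)
        = ‖ξ‖ • (‖ξ‖⁻¹ • ξ - inclusionInDoubleDual ℝ X x) := by
      rw [map_smul, smul_sub, smul_smul, mul_inv_cancel₀ hnorm.ne', one_smul]
    rw [heq, norm_smul, Real.norm_eq_abs, abs_of_pos hnorm]
    calc ‖ξ‖ * ‖‖ξ‖⁻¹ • ξ - inclusionInDoubleDual ℝ X x‖ < ‖ξ‖ * (ε / ‖ξ‖) :=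
          mul_lt_mul_of_pos_left hx hnorm
      _ = ε := by field_simp
end

section
/- Every Chebyshev set in a finite-dimensional real Hilbert space (Euclidean space) is convex. -/
open Metric

open RealInnerProductSpace

/-- Every Chebyshev set in a finite-dimensional real Hilbert space is
convex. -/
theorem stmt_19 {E : Type*} [NormedAddCommGroup E] [InnerProductSpace ℝ E]
    [FiniteDimensional ℝ E] (K : Set E)
    (hcheb : ∀ x : E, ∃! v, v ∈ K ∧ ‖x - v‖ = infDist x K) :
    Convex ℝ K := by
  choose P hQ hU using hcheb
  have hPmem : ∀ x, P x ∈ K := fun x => (hQ x).1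
  have hPdist : ∀ x, ‖x - P x‖ = infDist x K := fun x => (hQ x).2
  have hKne : K.Nonempty := ⟨P 0, hPmem 0⟩
  have hKc : IsClosed K := by
    rw [← closure_subset_iff_isClosed]
    intro x hx
    have h0 : infDist x K = 0 := infDist_zero_of_mem_closure hx
    have h1 : ‖x - P x‖ = 0 := by rw [hPdist x, h0]
    have h2 : x = P x := by
      have := norm_eq_zero.mp h1; rwa [sub_eq_zero] at this
    rw [h2]; exact hPmem x
  -- the function φ
  set d : E → ℝ := fun x => infDist x K with hd
  set φ : E → ℝ := fun x => (‖x‖ ^ 2 - d x ^ 2) / 2 with hφ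
  -- Lemma A : for k ∈ K, ⟪x,k⟫ - ‖k‖²/2 ≤ φ x
  have hA : ∀ x, ∀ k ∈ K, ⟪x, k⟫ - ‖k‖ ^ 2 / 2 ≤ φ x := by
    intro x k hk
    have h1 : d x ≤ ‖x - k‖ := by
      simpa [dist_eq_norm] using infDist_le_dist_of_mem (x := x) hk
    have h2 : (0:ℝ) ≤ d x := infDist_nonneg
    have h3 : ‖x - k‖ ^ 2 = ‖x‖ ^ 2 - 2 * ⟪x, k⟫ + ‖k‖ ^ 2 := norm_sub_sq_real x k
    simp only [hφ]
    nlinarith [sq_nonneg (‖x - k‖)]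
  -- equality at P x
  have heq : ∀ x, φ x = ⟪x, P x⟫ - ‖P x‖ ^ 2 / 2 := by
    intro x
    have h3 : ‖x - P x‖ ^ 2 = ‖x‖ ^ 2 - 2 * ⟪x, P x⟫ + ‖P x‖ ^ 2 := norm_sub_sq_real x (P x)
    have h4 : d x = ‖x - P x‖ := (hPdist x).symm
    simp only [hφ, h4]
    linarith [h3]
  -- Lemma B
  have hB : ∀ x y, φ y - φ x ≤ ⟪y - x, P y⟫ := by
    intro x y
    have h1 := hA x (P y) (hPmem y)
    have h2 := heq y
    rw [inner_sub_left]
    linarith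
  -- Lemma D : limit lemma for P
  have hcont : ∀ (u : ℕ → E) (x : E), Filter.Tendsto u Filter.atTop (nhds x) →
      ∀ (c : ℝ) (w : E), (∀ n, c ≤ ⟪w, P (u n)⟫) → c ≤ ⟪w, P x⟫ := by
    intro u x hu c w hc
    -- P (u n) is bounded
    obtain ⟨R, hR⟩ : ∃ R, ∀ n, P (u n) ∈ closedBall (0:E) R := by
      obtain ⟨R₀, hR₀⟩ := (hu.norm.bddAbove_range : BddAbove (Set.range fun n => ‖u n‖))
      refine ⟨2 * R₀ + ‖P 0‖, fun n => ?_⟩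
      have h1 : ‖u n‖ ≤ R₀ := hR₀ (Set.mem_range_self n)
      have h2 : d (u n) ≤ ‖u n - P 0‖ := by
        simpa [dist_eq_norm] using infDist_le_dist_of_mem (x := u n) (hPmem 0)
      have h3 : ‖u n - P (u n)‖ = d (u n) := hPdist (u n)
      have h4 : ‖P (u n)‖ ≤ ‖u n‖ + ‖u n - P (u n)‖ := by
        have := norm_sub_le (u n) (P (u n))
        have h5 : ‖P (u n)‖ - ‖u n‖ ≤ ‖u n - P (u n)‖ := by
          simpa [norm_sub_rev] using norm_sub_norm_le (P (u n)) (u n)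
        linarith
      have h6 : ‖u n - P 0‖ ≤ ‖u n‖ + ‖P 0‖ := norm_sub_le _ _
      simp only [mem_closedBall, dist_zero_right]
      linarith
    obtain ⟨q, hq, g, hg, hgq⟩ :=
      (isCompact_closedBall (0:E) R).tendsto_subseq hR
    have hqK : q ∈ K := hKc.mem_of_tendsto hgq
      (Filter.Eventually.of_forall fun n => hPmem (u (g n)))
    have hqdist : ‖x - q‖ = d x := by
      have t1 : Filter.Tendsto (fun n => ‖u (g n) - P (u (g n))‖) Filter.atTop
          (nhds (‖x - q‖)) := by
        have := ((hu.comp hg.tendsto_atTop).sub hgq).norm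
        exact this
      have t2 : Filter.Tendsto (fun n => ‖u (g n) - P (u (g n))‖) Filter.atTop
          (nhds (d x)) := by
        have : Filter.Tendsto (fun n => d (u (g n))) Filter.atTop (nhds (d x)) :=
          ((continuous_infDist_pt K).continuousAt.tendsto).comp (hu.comp hg.tendsto_atTop)
        simpa only [hPdist] using this
      exact tendsto_nhds_unique t1 t2
    have hqP : q = P x := hU x q ⟨hqK, hqdist⟩
    have : Filter.Tendsto (fun n => ⟪w, P (u (g n))⟫) Filter.atTop (nhds ⟪w, q⟫) :=
      ((continuous_const.inner continuous_id).continuousAt.tendsto (x := q)).comp hgq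
    rw [← hqP]
    exact le_of_tendsto_of_tendsto tendsto_const_nhds this
      (Filter.Eventually.of_forall fun n => hc (g n))
  -- main argument
  intro a ha b hb s t hs ht hst
  set z := s • a + t • b with hz
  -- lower bound for ψ = φ - ⟪·,z⟫
  set C : ℝ := max (‖a‖ ^ 2) (‖b‖ ^ 2) / 2 with hC
  have hlb : ∀ x, -C ≤ φ x - ⟪x, z⟫ := by
    intro x
    have hia := hA x a ha
    have hib := hA x b hb
    have hzin : ⟪x, z⟫ = s * ⟪x, a⟫ + t * ⟪x, b⟫ := by
      simp [hz, inner_add_right, inner_smul_right]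
    have hCa : ‖a‖ ^ 2 / 2 ≤ C := by
      have := le_max_left (‖a‖^2) (‖b‖^2); rw [hC]; linarith
    have hCb : ‖b‖ ^ 2 / 2 ≤ C := by
      have := le_max_right (‖a‖^2) (‖b‖^2); rw [hC]; linarith
    rcases le_total (⟪x, b⟫ : ℝ) (⟪x, a⟫ : ℝ) with hab | hab
    · have h1 : t * ⟪x, b⟫ ≤ t * ⟪x, a⟫ := mul_le_mul_of_nonneg_left hab ht
      have h2 : s * ⟪x, a⟫ + t * ⟪x, a⟫ = ⟪x, a⟫ := by rw [← add_mul, hst, one_mul]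
      linarith
    · have h1 : s * ⟪x, a⟫ ≤ s * ⟪x, b⟫ := mul_le_mul_of_nonneg_left hab hs
      have h2 : s * ⟪x, b⟫ + t * ⟪x, b⟫ = ⟪x, b⟫ := by rw [← add_mul, hst, one_mul]
      linarith
  -- it suffices to find points of K arbitrarily close to z
  suffices hsuf : ∀ ε > (0:ℝ), ∃ p ∈ K, dist z p ≤ ε by
    have : z ∈ closure K := by
      rw [Metric.mem_closure_iff]
      intro ε hε
      obtain ⟨p, hp, hdp⟩ := hsuf (ε / 2) (by linarith)
      exact ⟨p, hp, lt_of_le_of_lt hdp (by linarith)⟩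
    rwa [hKc.closure_eq] at this
  intro ε hε
  -- the perturbed functional
  set χ : E → ℝ := fun x => φ x - ⟪x, z⟫ + ε * ‖x‖ with hχ
  have hχcont : Continuous χ := by
    apply Continuous.add
    · apply Continuous.sub
      · apply Continuous.div_const
        exact ((continuous_norm.pow 2).sub ((continuous_infDist_pt K).pow 2))
      · exact continuous_id.inner continuous_const
    · exact continuous_const.mul continuous_norm
  set M : ℝ := χ 0 with hM
  have hMC : -C ≤ M := by
    have := hlb 0
    simp only [hM, hχ, norm_zero, mul_zero, add_zero]
    linarith
  set R : ℝ := (M + C) / ε + 1 with hR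
  have hRpos : (0:ℝ) < R := by
    have h : 0 ≤ (M + C) / ε := div_nonneg (by linarith) hε.le
    rw [hR]; linarith
  have hout : ∀ x : E, R < ‖x‖ → M < χ x := by
    intro x hx
    have h1 := hlb x
    have h2 : ε * R < ε * ‖x‖ := by exact (mul_lt_mul_iff_right₀ hε).mpr hx
    have h3 : ε * R = (M + C) + ε := by rw [hR]; field_simp
    simp only [hχ]
    nlinarith
  obtain ⟨xb, hxbmem, hxbmin⟩ := (isCompact_closedBall (0:E) R).exists_isMinOn
    ⟨0, mem_closedBall_self hRpos.le⟩ hχcont.continuousOn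
  have hglobal : ∀ y, χ xb ≤ χ y := by
    intro y
    rcases le_or_gt ‖y‖ R with hy | hy
    · exact hxbmin (by simpa [mem_closedBall, dist_eq_norm] using hy)
    · have h1 : χ xb ≤ M := hxbmin (mem_closedBall_self hRpos.le)
      exact h1.trans (hout y hy).le
  -- Ekeland-type inequality
  have hek : ∀ y, φ xb - ⟪xb, z⟫ - ε * ‖y - xb‖ ≤ φ y - ⟪y, z⟫ := by
    intro y
    have h1 := hglobal y
    have h2 : ‖y‖ - ‖xb‖ ≤ ‖y - xb‖ := by
      simpa using norm_sub_norm_le y xb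
    simp only [hχ] at h1
    nlinarith
  -- key inequality : ⟪y - xb, P y - z⟫ ≥ -ε‖y - xb‖
  have hkey : ∀ y, -(ε * ‖y - xb‖) ≤ ⟪y - xb, P y - z⟫ := by
    intro y
    have h1 := hB xb y
    have h2 := hek y
    rw [inner_sub_right]
    have h3 : ⟪y - xb, z⟫ = ⟪y, z⟫ - ⟪xb, z⟫ := by rw [inner_sub_left]
    linarith
  by_cases hPz : P xb = z
  · exact ⟨P xb, hPmem xb, by simp [hPz, hε.le]⟩
  · set w : E := ‖z - P xb‖⁻¹ • (z - P xb) with hw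
    have hnz : z - P xb ≠ 0 := sub_ne_zero.mpr (Ne.symm hPz)
    have hwn : ‖w‖ = 1 := norm_smul_inv_norm hnz
    -- along the sequence xb + (1/(n+1)) • w
    set u : ℕ → E := fun n => xb + ((n:ℝ) + 1)⁻¹ • w with hu'
    have hulim : Filter.Tendsto u Filter.atTop (nhds xb) := by
      have h0 : Filter.Tendsto (fun n : ℕ => ((n:ℝ) + 1)⁻¹) Filter.atTop (nhds 0) :=
        tendsto_one_div_add_atTop_nhds_zero_nat.congr (by intro n; rw [one_div])
      have : Filter.Tendsto (fun n : ℕ => ((n:ℝ) + 1)⁻¹ • w) Filter.atTop (nhds ((0:ℝ) • w)) :=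
        h0.smul_const w
      simpa using tendsto_const_nhds.add this
    have hcw : ∀ n, ⟪w, z⟫ - ε ≤ ⟪w, P (u n)⟫ := by
      intro n
      have hpos : (0:ℝ) < ((n:ℝ) + 1)⁻¹ := by positivity
      have h1 := hkey (u n)
      have h2 : u n - xb = ((n:ℝ) + 1)⁻¹ • w := by simp [hu']
      rw [h2] at h1
      rw [inner_smul_left, norm_smul] at h1
      simp only [RCLike.conj_to_real, Real.norm_eq_abs, abs_of_pos hpos, hwn, mul_one] at h1
      have h3 : -ε ≤ ⟪w, P (u n) - z⟫ := by
        have := (mul_le_mul_iff_right₀ hpos).mp (by linarith [h1] : ((n:ℝ)+1)⁻¹ * (-ε) ≤ ((n:ℝ)+1)⁻¹ * ⟪w, P (u n) - z⟫)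
        linarith
      rw [inner_sub_right] at h3
      linarith
    have hfin : ⟪w, z⟫ - ε ≤ ⟪w, P xb⟫ := hcont u xb hulim _ w hcw
    have hwz : ⟪w, z⟫ - ⟪w, P xb⟫ = ‖z - P xb‖ := by
      rw [hw, inner_smul_left, inner_smul_left]
      simp only [RCLike.conj_to_real]
      rw [← mul_sub, ← inner_sub_right]
      rw [real_inner_self_eq_norm_sq]
      have hn : ‖z - P xb‖ ≠ 0 := norm_ne_zero_iff.mpr hnz
      rw [sq]
      rw [inv_mul_cancel_left₀ hn]
    refine ⟨P xb, hPmem xb, ?_⟩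
    rw [dist_eq_norm]
    linarith [hwz ▸ (by linarith : ⟪w, z⟫ - ⟪w, P xb⟫ ≤ ε)]
end
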